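/- Assume (RDQ) holds. Then the integral along the diagonal of the kernel K(z,w) := (ν/π)ⁿ e^{ν⟨z,w⟩} ∑_{γ∈Γ} χ(γ) e^{−(ν/2)|γ|² + ν(⟨z,γ⟩ − conj(⟨w,γ⟩))} against the Gaussian weight equals ∫_{Λ(Γ)} K(z,z) e^{−ν|z|²} dm(z) = (ν/π)ⁿ vol(ℂⁿ/Γ). -/

import Mathlib

open MeasureTheory Complex

noncomputable section

/-- Hermitian form ⟨z,w⟩ = ∑ zⱼ conj(wⱼ) on ℂⁿ. -/
def herm {n : ℕ} (z w : Fin n → ℂ) : ℂ := ∑ j, z j * (starRingEnd ℂ) (w j)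

/-- Symplectic form ω(z,w) = Im⟨z,w⟩. -/
def symp {n : ℕ} (z w : Fin n → ℂ) : ℝ := (herm z w).im

/-- Squared Euclidean norm |z|². -/
def absq {n : ℕ} (z : Fin n → ℂ) : ℝ := ∑ j, Complex.normSq (z j)

/-- The (Γ,χ)-periodized Bargmann–Fock kernel
K(z,w) = (ν/π)ⁿ e^{ν⟨z,w⟩} ∑_{γ∈Γ} χ(γ) e^{-(ν/2)|γ|² + ν(⟨z,γ⟩ - conj⟨w,γ⟩)}. -/
def thetaKer {n : ℕ} (ν : ℝ) (Γ : AddSubgroup (Fin n → ℂ)) (χ : Γ → ℂ)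
    (z w : Fin n → ℂ) : ℂ :=
  ((ν / Real.pi) ^ n : ℝ) * Complex.exp ((ν : ℂ) * herm z w) *
    ∑' γ : Γ, χ γ * Complex.exp (((-(ν / 2) * absq (γ : Fin n → ℂ) : ℝ) : ℂ) +
      (ν : ℂ) * (herm z (γ : Fin n → ℂ) - (starRingEnd ℂ) (herm w (γ : Fin n → ℂ))))

lemma herm_add_left {n : ℕ} (a b c : Fin n → ℂ) : herm (a + b) c = herm a c + herm b c := by
  simp [herm, add_mul, Finset.sum_add_distrib]

lemma herm_swap {n : ℕ} (z w : Fin n → ℂ) : herm w z = (starRingEnd ℂ) (herm z w) := by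
  simp [herm, map_sum, mul_comm]

lemma herm_self {n : ℕ} (z : Fin n → ℂ) : herm z z = (absq z : ℝ) := by
  simp [herm, Complex.mul_conj, absq]

lemma herm_zero_right {n : ℕ} (z : Fin n → ℂ) : herm z 0 = 0 := by
  simp [herm]

lemma symp_add_left {n : ℕ} (a b c : Fin n → ℂ) : symp (a + b) c = symp a c + symp b c := by
  simp [symp, herm_add_left]

lemma symp_swap {n : ℕ} (z w : Fin n → ℂ) : symp w z = - symp z w := by
  simp only [symp]
  rw [herm_swap, Complex.conj_im]

lemma absq_eq_zero_iff {n : ℕ} (z : Fin n → ℂ) : absq z = 0 ↔ z = 0 := by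
  constructor
  · intro h
    funext j
    have h0 := (Finset.sum_eq_zero_iff_of_nonneg (fun i _ => Complex.normSq_nonneg (z i))).mp h
    have := h0 j (Finset.mem_univ j)
    simpa [Complex.normSq_eq_zero] using this
  · rintro rfl; simp [absq]

/-- The commutation relation from (RDQ): e^{2iν ω(γ₁,γ₂)} = 1 on the lattice. -/
lemma char_one {n : ℕ} (ν : ℝ) {Γ : AddSubgroup (Fin n → ℂ)} {χ : Γ → ℂ}
    (hχ : ∀ γ, ‖χ γ‖ = 1)
    (hRDQ : ∀ γ₁ γ₂ : Γ, χ (γ₁ + γ₂) = χ γ₁ * χ γ₂ *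
        Complex.exp (Complex.I * ν * symp (γ₁ : Fin n → ℂ) (γ₂ : Fin n → ℂ)))
    (γ₁ γ₂ : Γ) :
    Complex.exp (((2 * ν * symp (γ₁ : Fin n → ℂ) (γ₂ : Fin n → ℂ) : ℝ) : ℂ) * Complex.I) = 1 := by
  have h1 := hRDQ γ₁ γ₂
  have h2 := hRDQ γ₂ γ₁
  rw [add_comm] at h2
  have hne1 : χ γ₁ ≠ 0 := fun h => by simpa [h] using hχ γ₁
  have hne2 : χ γ₂ ≠ 0 := fun h => by simpa [h] using hχ γ₂
  have hne : χ γ₁ * χ γ₂ ≠ 0 := mul_ne_zero hne1 hne2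
  rw [h1, mul_comm (χ γ₂) (χ γ₁)] at h2
  set s : ℝ := symp (γ₁ : Fin n → ℂ) (γ₂ : Fin n → ℂ) with hs_def
  have hs : symp (γ₂ : Fin n → ℂ) (γ₁ : Fin n → ℂ) = -s := symp_swap _ _
  have key : Complex.exp (Complex.I * ν * (s : ℂ))
      = Complex.exp (Complex.I * ν * ((-s : ℝ) : ℂ)) := by
    have := mul_left_cancel₀ hne h2
    rw [hs] at this
    exact_mod_cast this
  have expand : Complex.exp (((2 * ν * s : ℝ) : ℂ) * Complex.I)
      = Complex.exp (Complex.I * ν * (s : ℂ)) * Complex.exp (Complex.I * ν * (s : ℂ)) := by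
    rw [← Complex.exp_add]
    push_cast
    ring_nf
  rw [expand]
  nth_rewrite 2 [key]
  rw [← Complex.exp_add]
  push_cast
  ring_nf
  exact Complex.exp_zero

lemma chi_zero {n : ℕ} (ν : ℝ) {Γ : AddSubgroup (Fin n → ℂ)} {χ : Γ → ℂ}
    (hχ : ∀ γ, ‖χ γ‖ = 1)
    (hRDQ : ∀ γ₁ γ₂ : Γ, χ (γ₁ + γ₂) = χ γ₁ * χ γ₂ *
        Complex.exp (Complex.I * ν * symp (γ₁ : Fin n → ℂ) (γ₂ : Fin n → ℂ))) :
    χ 0 = 1 := by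
  have h := hRDQ 0 0
  have hz : symp ((0 : Γ) : Fin n → ℂ) ((0 : Γ) : Fin n → ℂ) = 0 := by
    simp [symp, herm_zero_right]
  rw [add_zero, hz] at h
  simp only [Complex.ofReal_zero, mul_zero, Complex.exp_zero, mul_one] at h
  have hne : χ 0 ≠ 0 := by intro h0; have := hχ 0; rw [h0] at this; simp at this
  have : χ 0 * 1 = χ 0 * χ 0 := by rw [mul_one]; exact h
  exact (mul_left_cancel₀ hne this).symm

open Pointwise in
/-- Vanishing of the integral of a nontrivial lattice-periodic character over the
fundamental domain. -/
lemma integral_char_zero {n : ℕ} (ν : ℝ) (hν : 0 < ν)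
    (b : Module.Basis (Fin (2 * n)) ℝ (Fin n → ℂ)) (γ : Fin n → ℂ) (hγ : γ ≠ 0)
    (hper : ∀ lam : (Submodule.span ℤ (Set.range b)).toAddSubgroup,
        Complex.exp (((2 * ν * symp (lam : Fin n → ℂ) γ : ℝ) : ℂ) * Complex.I) = 1) :
    (∫ z in ZSpan.fundamentalDomain b,
        Complex.exp (((2 * ν * symp z γ : ℝ) : ℂ) * Complex.I)) = 0 := by
  set f : (Fin n → ℂ) → ℂ := fun z => Complex.exp (((2 * ν * symp z γ : ℝ) : ℂ) * Complex.I)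
    with hf_def
  have hmul : ∀ a z : Fin n → ℂ, f (a + z) = f a * f z := by
    intro a z
    simp only [hf_def, symp_add_left, ← Complex.exp_add]
    congr 1
    push_cast
    ring
  -- periodicity
  have hper' : ∀ (g : (Submodule.span ℤ (Set.range b)).toAddSubgroup) (x : Fin n → ℂ),
      f (g +ᵥ x) = f x := by
    intro g x
    show f ((g : Fin n → ℂ) + x) = f x
    rw [hmul]
    rw [show f (g : Fin n → ℂ) = 1 from hper g, one_mul]
  -- the shift vector
  have habs : absq γ ≠ 0 := fun h => hγ ((absq_eq_zero_iff γ).mp h)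
  have habs' : 0 < absq γ := lt_of_le_of_ne (Finset.sum_nonneg fun i _ => Complex.normSq_nonneg _) (Ne.symm habs)
  set c : ℝ := Real.pi / (2 * ν * absq γ) with hc
  set v : Fin n → ℂ := fun j => (c : ℂ) * Complex.I * γ j with hv
  have hsympv : symp v γ = c * absq γ := by
    simp only [symp, herm, hv]
    rw [show (∑ j, (c : ℂ) * Complex.I * γ j * (starRingEnd ℂ) (γ j))
        = (c : ℂ) * Complex.I * ∑ j, γ j * (starRingEnd ℂ) (γ j) by
      rw [Finset.mul_sum]; congr 1; ext j; ring]
    simp only [Complex.mul_conj]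
    rw [show (∑ j, (Complex.normSq (γ j) : ℂ)) = ((absq γ : ℝ) : ℂ) by
      push_cast [absq]; rfl]
    simp [Complex.mul_im]
  have hfv : f v = -1 := by
    have : 2 * ν * symp v γ = Real.pi := by
      rw [hsympv, hc]
      field_simp
    simp only [hf_def, this]
    simpa using Complex.exp_pi_mul_I
  -- two fundamental domains
  haveI : Countable (Submodule.span ℤ (Set.range b)).toAddSubgroup :=
    inferInstanceAs (Countable (Submodule.span ℤ (Set.range b)))
  have hD := ZSpan.isAddFundamentalDomain' b (volume : Measure (Fin n → ℂ))
  have hD2 : IsAddFundamentalDomain (Submodule.span ℤ (Set.range b)).toAddSubgroup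
      (v +ᵥ ZSpan.fundamentalDomain b) volume := hD.vadd_of_comm v
  have h1 : (∫ z in ZSpan.fundamentalDomain b, f z)
      = ∫ z in v +ᵥ ZSpan.fundamentalDomain b, f z :=
    hD.setIntegral_eq hD2 hper'
  have h2 : (∫ z in v +ᵥ ZSpan.fundamentalDomain b, f z)
      = ∫ z in ZSpan.fundamentalDomain b, f (v + z) := by
    rw [← Set.image_vadd]
    exact (measurePreserving_vadd v volume).setIntegral_image_emb
      (measurableEmbedding_const_vadd _) _ _
  have h3 : (∫ z in ZSpan.fundamentalDomain b, f (v + z))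
      = - ∫ z in ZSpan.fundamentalDomain b, f z := by
    rw [← integral_neg]
    congr 1
    funext z
    rw [hmul, hfv]
    ring
  have := h1.trans (h2.trans h3)
  linear_combination this / 2

lemma herm_zero_left {n : ℕ} (w : Fin n → ℂ) : herm 0 w = 0 := by
  simp [herm]


/-- The diagonal Gaussian integral of the periodized kernel over a fundamental domain
equals (ν/π)ⁿ vol(ℂⁿ/Γ). -/
theorem stmt_11 {n : ℕ} (ν : ℝ) (hν : 0 < ν)
    (b : Module.Basis (Fin (2 * n)) ℝ (Fin n → ℂ))
    (χ : (Submodule.span ℤ (Set.range b)).toAddSubgroup → ℂ) (hχ : ∀ γ, ‖χ γ‖ = 1)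
    (hRDQ : ∀ γ₁ γ₂ : (Submodule.span ℤ (Set.range b)).toAddSubgroup,
      χ (γ₁ + γ₂) = χ γ₁ * χ γ₂ *
        Complex.exp (Complex.I * ν * symp (γ₁ : Fin n → ℂ) (γ₂ : Fin n → ℂ)))
    (hsum : ∀ z w : Fin n → ℂ,
      Summable fun γ : (Submodule.span ℤ (Set.range b)).toAddSubgroup =>
        χ γ * Complex.exp (((-(ν / 2) * absq (γ : Fin n → ℂ) : ℝ) : ℂ) +
          (ν : ℂ) * (herm z (γ : Fin n → ℂ) - (starRingEnd ℂ) (herm w (γ : Fin n → ℂ))))) :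
    (∫ z in ZSpan.fundamentalDomain b,
        thetaKer ν (Submodule.span ℤ (Set.range b)).toAddSubgroup χ z z *
          ((Real.exp (-ν * absq z) : ℝ) : ℂ)) =
      ((((ν / Real.pi) ^ n * (volume (ZSpan.fundamentalDomain b)).toReal : ℝ)) : ℂ) := by
  classical
  haveI : Countable (Submodule.span ℤ (Set.range b)).toAddSubgroup :=
    inferInstanceAs (Countable (Submodule.span ℤ (Set.range b)))
  set Λ := ZSpan.fundamentalDomain b with hΛ
  set g : (Submodule.span ℤ (Set.range b)).toAddSubgroup → (Fin n → ℂ) → ℂ := fun γ z =>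
    χ γ * Complex.exp (((-(ν / 2) * absq (γ : Fin n → ℂ) : ℝ) : ℂ) +
      ((2 * ν * symp z (γ : Fin n → ℂ) : ℝ) : ℂ) * Complex.I) with hg
  -- pointwise identity
  have hpt : ∀ z, thetaKer ν (Submodule.span ℤ (Set.range b)).toAddSubgroup χ z z * ((Real.exp (-ν * absq z) : ℝ) : ℂ)
      = (((ν / Real.pi) ^ n : ℝ) : ℂ) * ∑' γ : (Submodule.span ℤ (Set.range b)).toAddSubgroup, g γ z := by
    intro z
    unfold thetaKer
    have hrw : ∀ γ : (Submodule.span ℤ (Set.range b)).toAddSubgroup,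
        χ γ * Complex.exp (((-(ν / 2) * absq (γ : Fin n → ℂ) : ℝ) : ℂ) +
          (ν : ℂ) * (herm z (γ : Fin n → ℂ) - (starRingEnd ℂ) (herm z (γ : Fin n → ℂ))))
        = g γ z := by
      intro γ
      simp only [hg]
      congr 2
      rw [Complex.sub_conj]
      push_cast [symp]
      ring
    rw [tsum_congr hrw]
    have h1 : Complex.exp ((ν : ℂ) * herm z z) * ((Real.exp (-ν * absq z) : ℝ) : ℂ) = 1 := by
      rw [herm_self, Complex.ofReal_exp, ← Complex.exp_add]
      rw [show (ν : ℂ) * ((absq z : ℝ) : ℂ) + (((-ν * absq z : ℝ)) : ℂ) = 0 by push_cast; ring]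
      exact Complex.exp_zero
    linear_combination ((((ν / Real.pi) ^ n : ℝ) : ℂ) * ∑' γ : (Submodule.span ℤ (Set.range b)).toAddSubgroup, g γ z) * h1
  -- measurability
  have hcont : ∀ γ : (Submodule.span ℤ (Set.range b)).toAddSubgroup, Continuous (g γ) := by
    intro γ
    apply Continuous.mul continuous_const
    apply Complex.continuous_exp.comp
    apply Continuous.add continuous_const
    apply Continuous.mul _ continuous_const
    apply Complex.continuous_ofReal.comp
    apply Continuous.mul continuous_const
    exact Complex.continuous_im.comp
      (continuous_finset_sum _ fun j _ => (continuous_apply j).mul continuous_const)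
  -- norm of summand
  have hnorm : ∀ (γ : (Submodule.span ℤ (Set.range b)).toAddSubgroup) z, ‖g γ z‖ = Real.exp (-(ν / 2) * absq (γ : Fin n → ℂ)) := by
    intro γ z
    simp only [hg, norm_mul]
    rw [hχ γ, one_mul, Complex.norm_exp]
    congr 1
    simp [Complex.add_re, Complex.ofReal_re, Complex.mul_re, Complex.ofReal_im,
      Complex.I_re, Complex.I_im]
  -- summability of gaussian weights
  have hS : Summable (fun γ : (Submodule.span ℤ (Set.range b)).toAddSubgroup => Real.exp (-(ν / 2) * absq (γ : Fin n → ℂ))) := by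
    have h0 := summable_norm_iff.mpr (hsum 0 0)
    refine h0.congr fun γ => ?_
    simp only [herm_zero_left, map_zero, sub_zero, mul_zero, add_zero, norm_mul]
    rw [hχ γ, one_mul, Complex.norm_exp, Complex.ofReal_re]
  have hvol : volume Λ ≠ ⊤ := (ZSpan.fundamentalDomain_isBounded b).measure_lt_top.ne
  -- finiteness for integral_tsum
  have hlint : ∀ γ : (Submodule.span ℤ (Set.range b)).toAddSubgroup, (∫⁻ z, ‖g γ z‖₊ ∂(volume.restrict Λ))
      = ENNReal.ofReal (Real.exp (-(ν / 2) * absq (γ : Fin n → ℂ))) * volume Λ := by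
    intro γ
    simp_rw [← enorm_eq_nnnorm, ← ofReal_norm, hnorm γ]
    rw [lintegral_const, Measure.restrict_apply_univ]
  have hfin : (∑' γ : (Submodule.span ℤ (Set.range b)).toAddSubgroup, ∫⁻ z, ‖g γ z‖₊ ∂(volume.restrict Λ)) ≠ ⊤ := by
    rw [tsum_congr hlint, ENNReal.tsum_mul_right,
      ← ENNReal.ofReal_tsum_of_nonneg (fun γ => (Real.exp_pos _).le) hS]
    exact ENNReal.mul_ne_top ENNReal.ofReal_ne_top hvol
  -- vanishing for nonzero lattice points
  have hzero : ∀ γ : (Submodule.span ℤ (Set.range b)).toAddSubgroup, γ ≠ 0 → (∫ z in Λ, g γ z) = 0 := by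
    intro γ hγ0
    have hγne : (γ : Fin n → ℂ) ≠ 0 := by
      simpa [ZeroMemClass.coe_eq_zero] using hγ0
    have hsplit : (fun z => g γ z) = fun z =>
        (χ γ * Complex.exp (((-(ν / 2) * absq (γ : Fin n → ℂ) : ℝ) : ℂ))) *
          Complex.exp (((2 * ν * symp z (γ : Fin n → ℂ) : ℝ) : ℂ) * Complex.I) := by
      funext z
      simp only [hg]
      rw [Complex.exp_add]
      ring
    rw [hsplit, integral_const_mul,
      integral_char_zero ν hν b _ hγne (fun lam => char_one ν hχ hRDQ lam γ), mul_zero]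
  -- the zero term
  have hg0 : ∀ z, g (0 : (Submodule.span ℤ (Set.range b)).toAddSubgroup) z = 1 := by
    intro z
    simp only [hg, ZeroMemClass.coe_zero]
    rw [chi_zero ν hχ hRDQ]
    have h1 : absq (0 : Fin n → ℂ) = 0 := by simp [absq]
    have h2 : symp z (0 : Fin n → ℂ) = 0 := by simp [symp, herm_zero_right]
    rw [h1, h2]
    simp
  -- assemble
  simp only [hpt]
  rw [integral_const_mul, integral_tsum (fun γ => ((hcont γ).aestronglyMeasurable)) hfin,
    tsum_eq_single 0 (fun γ hγ => hzero γ hγ)]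
  simp_rw [hg0]
  rw [setIntegral_const]
  simp only [Complex.real_smul, mul_one]
  push_cast
  ring
  rfl
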